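/- For Tyler's cost ρ(x) = log(x)/(2p), the function ρ(eˣ) = x/(2p) is convex (but not strictly convex); hence the Tyler negative log-likelihood L₀(Σ) = (1/2p) Σᵢ log(zᵢᵀΣ⁻¹zᵢ) + (n/2) log det Σ is geodesically convex on S₊₊(p). -/

import Mathlib

open Matrix

noncomputable def mpow {p : ℕ} (A : Matrix (Fin p) (Fin p) ℝ) (t : ℝ) :
    Matrix (Fin p) (Fin p) ℝ :=
  if h : A.IsHermitian then
    (h.eigenvectorUnitary : Matrix (Fin p) (Fin p) ℝ) *
      Matrix.diagonal (fun i => h.eigenvalues i ^ t) *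
      (star (h.eigenvectorUnitary : Matrix (Fin p) (Fin p) ℝ))
  else A

/-- The geodesic `γ(t) = Σ₁^{1/2} (Σ₁^{-1/2} Σ₂ Σ₁^{-1/2})^t Σ₁^{1/2}` on `S₊₊(p)`. -/
noncomputable def geo {p : ℕ} (A B : Matrix (Fin p) (Fin p) ℝ) (t : ℝ) :
    Matrix (Fin p) (Fin p) ℝ :=
  mpow A (1/2) * mpow (mpow A (-(1/2)) * B * mpow A (-(1/2))) t * mpow A (1/2)
variable {p : ℕ} {A : Matrix (Fin p) (Fin p) ℝ}

lemma mpow_eq (hA : A.IsHermitian) (t : ℝ) :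
    mpow A t = (hA.eigenvectorUnitary : Matrix (Fin p) (Fin p) ℝ) *
      Matrix.diagonal (fun i => hA.eigenvalues i ^ t) *
      (star (hA.eigenvectorUnitary : Matrix (Fin p) (Fin p) ℝ)) := dif_pos hA

lemma star_mul_self_eq (hA : A.IsHermitian) :
    star (hA.eigenvectorUnitary : Matrix (Fin p) (Fin p) ℝ) * (hA.eigenvectorUnitary : Matrix (Fin p) (Fin p) ℝ) = 1 := by
  exact (Unitary.mem_iff.mp (hA.eigenvectorUnitary).2).1

lemma mul_star_self_eq (hA : A.IsHermitian) :
    (hA.eigenvectorUnitary : Matrix (Fin p) (Fin p) ℝ) * star (hA.eigenvectorUnitary : Matrix (Fin p) (Fin p) ℝ) = 1 := by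
  exact (Unitary.mem_iff.mp (hA.eigenvectorUnitary).2).2

lemma conj_mul_conj (hA : A.IsHermitian) (d e : Fin p → ℝ) :
    ((hA.eigenvectorUnitary : Matrix (Fin p) (Fin p) ℝ) * Matrix.diagonal d *
      star (hA.eigenvectorUnitary : Matrix (Fin p) (Fin p) ℝ)) *
    ((hA.eigenvectorUnitary : Matrix (Fin p) (Fin p) ℝ) * Matrix.diagonal e *
      star (hA.eigenvectorUnitary : Matrix (Fin p) (Fin p) ℝ)) =
    (hA.eigenvectorUnitary : Matrix (Fin p) (Fin p) ℝ) * Matrix.diagonal (fun i => d i * e i) *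
      star (hA.eigenvectorUnitary : Matrix (Fin p) (Fin p) ℝ) := by
  have h1 := star_mul_self_eq hA
  calc ((hA.eigenvectorUnitary : Matrix (Fin p) (Fin p) ℝ) * Matrix.diagonal d *
      star (hA.eigenvectorUnitary : Matrix (Fin p) (Fin p) ℝ)) *
    ((hA.eigenvectorUnitary : Matrix (Fin p) (Fin p) ℝ) * Matrix.diagonal e *
      star (hA.eigenvectorUnitary : Matrix (Fin p) (Fin p) ℝ))
      = (hA.eigenvectorUnitary : Matrix (Fin p) (Fin p) ℝ) * (Matrix.diagonal d *
        ((star (hA.eigenvectorUnitary : Matrix (Fin p) (Fin p) ℝ) *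
          (hA.eigenvectorUnitary : Matrix (Fin p) (Fin p) ℝ)) * Matrix.diagonal e)) *
        star (hA.eigenvectorUnitary : Matrix (Fin p) (Fin p) ℝ) := by
        simp only [Matrix.mul_assoc]
    _ = _ := by rw [h1, one_mul, Matrix.diagonal_mul_diagonal, Matrix.mul_assoc]

lemma mpow_add (hA : A.PosDef) (s t : ℝ) :
    mpow A s * mpow A t = mpow A (s + t) := by
  rw [mpow_eq hA.1, mpow_eq hA.1, mpow_eq hA.1, conj_mul_conj,
    show (fun i => hA.1.eigenvalues i ^ s * hA.1.eigenvalues i ^ t)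
      = (fun i => hA.1.eigenvalues i ^ (s + t)) from
      funext fun i => (Real.rpow_add (hA.eigenvalues_pos i) s t).symm]

lemma mpow_zero (hA : A.IsHermitian) : mpow A 0 = 1 := by
  rw [mpow_eq hA]
  simp [mul_star_self_eq hA]

lemma mpow_one (hA : A.IsHermitian) : mpow A 1 = A := by
  rw [mpow_eq hA]
  conv_rhs => rw [hA.spectral_theorem]
  congr 1
  simp [Function.comp]

lemma mpow_mul_neg (hA : A.PosDef) (t : ℝ) : mpow A t * mpow A (-t) = 1 := by
  rw [mpow_add hA, add_neg_cancel, mpow_zero hA.1]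

lemma mpow_inv (hA : A.PosDef) (t : ℝ) : (mpow A t)⁻¹ = mpow A (-t) :=
  Matrix.inv_eq_right_inv (mpow_mul_neg hA t)

lemma inv_eq_mpow (hA : A.PosDef) : A⁻¹ = mpow A (-1) := by
  conv_lhs => rw [← mpow_one hA.1]
  rw [mpow_inv hA]

lemma posDef_conj {B C : Matrix (Fin p) (Fin p) ℝ} (hC : C.PosDef) (hB : IsUnit B) :
    (B * C * Bᴴ).PosDef := by
  refine Matrix.PosDef.of_dotProduct_mulVec_pos (Matrix.isHermitian_mul_mul_conjTranspose _ hC.1) fun x hx => ?_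
  have hBH : IsUnit Bᴴ := by
    rw [show Bᴴ = star B from rfl]
    exact hB.star
  have hinj : Function.Injective (Bᴴ.mulVec) := Matrix.mulVec_injective_iff_isUnit.mpr hBH
  have hx' : Bᴴ *ᵥ x ≠ 0 := by
    intro h
    exact hx (hinj (by simpa using h))
  simpa only [star_mulVec, Matrix.dotProduct_mulVec, Matrix.vecMul_vecMul, Matrix.mul_assoc,
    Matrix.conjTranspose_conjTranspose]
    using hC.dotProduct_mulVec_pos hx'

lemma mpow_posDef (hA : A.PosDef) (t : ℝ) : (mpow A t).PosDef := by
  rw [mpow_eq hA.1]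
  have hd : (Matrix.diagonal fun i => hA.1.eigenvalues i ^ t).PosDef :=
    .diagonal fun i => Real.rpow_pos_of_pos (hA.eigenvalues_pos i) t
  refine posDef_conj hd ((Matrix.isUnit_iff_isUnit_det _).mpr (IsUnit.of_mul_eq_one
    (star (hA.1.eigenvectorUnitary : Matrix (Fin p) (Fin p) ℝ)).det ?_))
  rw [← Matrix.det_mul, mul_star_self_eq hA.1, Matrix.det_one]

lemma mpow_det (hA : A.PosDef) (t : ℝ) :
    (mpow A t).det = ∏ i, hA.1.eigenvalues i ^ t := by
  rw [mpow_eq hA.1, Matrix.det_mul, Matrix.det_mul]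
  have h1 : (hA.1.eigenvectorUnitary : Matrix (Fin p) (Fin p) ℝ).det *
      (star (hA.1.eigenvectorUnitary : Matrix (Fin p) (Fin p) ℝ)).det = 1 := by
    rw [← Matrix.det_mul, mul_star_self_eq hA.1, Matrix.det_one]
  calc (hA.1.eigenvectorUnitary : Matrix (Fin p) (Fin p) ℝ).det *
        (Matrix.diagonal fun i => hA.1.eigenvalues i ^ t).det *
        (star (hA.1.eigenvectorUnitary : Matrix (Fin p) (Fin p) ℝ)).det
      = ((hA.1.eigenvectorUnitary : Matrix (Fin p) (Fin p) ℝ).det *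
        (star (hA.1.eigenvectorUnitary : Matrix (Fin p) (Fin p) ℝ)).det) *
        (Matrix.diagonal fun i => hA.1.eigenvalues i ^ t).det := by ring
    _ = (Matrix.diagonal fun i => hA.1.eigenvalues i ^ t).det := by rw [h1, one_mul]
    _ = ∏ i, hA.1.eigenvalues i ^ t := Matrix.det_diagonal

lemma log_det_mpow (hA : A.PosDef) (t : ℝ) :
    Real.log (mpow A t).det = t * Real.log A.det := by
  have hdet : A.det = ∏ i, hA.1.eigenvalues i := by
    have := hA.1.det_eq_prod_eigenvalues
    simpa using this
  rw [mpow_det hA, hdet, Real.log_prod (fun i _ =>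
      (Real.rpow_pos_of_pos (hA.eigenvalues_pos i) t).ne'),
    Real.log_prod (fun i _ => (hA.eigenvalues_pos i).ne'),
    Finset.mul_sum]
  exact Finset.sum_congr rfl fun i _ => Real.log_rpow (hA.eigenvalues_pos i) _

lemma quadform_mpow (hA : A.PosDef) (t : ℝ) (w : Fin p → ℝ) :
    w ⬝ᵥ (mpow A t) *ᵥ w =
      ∑ i, ((star (hA.1.eigenvectorUnitary : Matrix (Fin p) (Fin p) ℝ) *ᵥ w) i) ^ 2 *
        hA.1.eigenvalues i ^ t := by
  set U := (hA.1.eigenvectorUnitary : Matrix (Fin p) (Fin p) ℝ) with hU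
  set v := star U *ᵥ w with hv
  have hvw : w ᵥ* U = v := by
    rw [hv, show star U = Uᴴ from rfl, Matrix.conjTranspose_eq_transpose_of_trivial,
      Matrix.mulVec_transpose]
  rw [mpow_eq hA.1, ← hU, ← Matrix.mulVec_mulVec, ← Matrix.mulVec_mulVec,
    Matrix.dotProduct_mulVec, hvw, ← hv]
  simp only [dotProduct, Matrix.mulVec_diagonal]
  exact Finset.sum_congr rfl fun i _ => by ring

lemma hoelder_sum {ι : Type*} [Fintype ι] (c lam : ι → ℝ) (hc : ∀ i, 0 ≤ c i)
    (hl : ∀ i, 0 < lam i) {t : ℝ} (ht : t ∈ Set.Ioo (0:ℝ) 1)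
    (hS0 : 0 < ∑ i, c i) (hS1 : 0 < ∑ i, c i * lam i) :
    ∑ i, c i * lam i ^ t ≤ (∑ i, c i) ^ (1 - t) * (∑ i, c i * lam i) ^ t := by
  obtain ⟨ht0, ht1⟩ := ht
  set S0 := ∑ i, c i
  set S1 := ∑ i, c i * lam i
  have key : ∀ i, c i * lam i ^ t ≤
      S0 ^ (1 - t) * S1 ^ t * ((1 - t) * (c i / S0) + t * (c i * lam i / S1)) := by
    intro i
    have h1 := Real.geom_mean_le_arith_mean2_weighted (w₁ := 1 - t) (w₂ := t)
      (p₁ := c i / S0) (p₂ := c i * lam i / S1) (by linarith) ht0.le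
      (div_nonneg (hc i) hS0.le) (div_nonneg (mul_nonneg (hc i) (hl i).le) hS1.le)
      (by ring)
    have h2 : (c i / S0) ^ (1 - t) * (c i * lam i / S1) ^ t
        = c i * lam i ^ t / (S0 ^ (1 - t) * S1 ^ t) := by
      rw [Real.div_rpow (hc i) hS0.le, Real.div_rpow (mul_nonneg (hc i) (hl i).le) hS1.le,
        Real.mul_rpow (hc i) (hl i).le]
      rw [div_mul_div_comm, ← mul_assoc, ← Real.rpow_add' (hc i) (by norm_num), sub_add_cancel,
        Real.rpow_one]
    rw [h2, div_le_iff₀ (by positivity)] at h1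
    calc c i * lam i ^ t ≤ ((1 - t) * (c i / S0) + t * (c i * lam i / S1)) *
          (S0 ^ (1 - t) * S1 ^ t) := h1
      _ = _ := by ring
  calc ∑ i, c i * lam i ^ t
      ≤ ∑ i, S0 ^ (1 - t) * S1 ^ t * ((1 - t) * (c i / S0) + t * (c i * lam i / S1)) :=
        Finset.sum_le_sum fun i _ => key i
    _ = S0 ^ (1 - t) * S1 ^ t * ((1 - t) * (S0 / S0) + t * (S1 / S1)) := by
        rw [← Finset.mul_sum]
        congr 1
        rw [Finset.sum_add_distrib, ← Finset.mul_sum, ← Finset.mul_sum, ← Finset.sum_div,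
          ← Finset.sum_div]
    _ = S0 ^ (1 - t) * S1 ^ t := by
        rw [div_self hS0.ne', div_self hS1.ne']
        ring

lemma log_hoelder {ι : Type*} [Fintype ι] (c lam : ι → ℝ) (hc : ∀ i, 0 ≤ c i)
    (hl : ∀ i, 0 < lam i) {t : ℝ} (ht : t ∈ Set.Ioo (0:ℝ) 1)
    (hS0 : 0 < ∑ i, c i) (hS1 : 0 < ∑ i, c i * lam i) :
    Real.log (∑ i, c i * lam i ^ t) ≤
      (1 - t) * Real.log (∑ i, c i) + t * Real.log (∑ i, c i * lam i) := by
  have hpos : 0 < ∑ i, c i * lam i ^ t := by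
    obtain ⟨i, hci⟩ := Finset.exists_lt_of_sum_lt (by simpa using hS0 :
      ∑ i : ι, (0:ℝ) < ∑ i, c i)
    refine Finset.sum_pos' (fun j _ => mul_nonneg (hc j)
      (Real.rpow_pos_of_pos (hl j) t).le) ⟨i, Finset.mem_univ i, ?_⟩
    exact mul_pos hci.2 (Real.rpow_pos_of_pos (hl i) t)
  calc Real.log (∑ i, c i * lam i ^ t)
      ≤ Real.log ((∑ i, c i) ^ (1 - t) * (∑ i, c i * lam i) ^ t) :=
        Real.log_le_log hpos (hoelder_sum c lam hc hl ht hS0 hS1)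
    _ = (1 - t) * Real.log (∑ i, c i) + t * Real.log (∑ i, c i * lam i) := by
        rw [Real.log_mul (by positivity) (by positivity), Real.log_rpow hS0,
          Real.log_rpow hS1]

section key
variable {B : Matrix (Fin p) (Fin p) ℝ}

lemma quad_conj {R N : Matrix (Fin p) (Fin p) ℝ} (hR : R.IsHermitian) (x : Fin p → ℝ) :
    x ⬝ᵥ (R * N * R) *ᵥ x = (R *ᵥ x) ⬝ᵥ (N *ᵥ (R *ᵥ x)) := by
  have hx : x ᵥ* R = R *ᵥ x := by
    conv_rhs => rw [← hR.eq, Matrix.conjTranspose_eq_transpose_of_trivial,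
      Matrix.mulVec_transpose]
  rw [← Matrix.mulVec_mulVec, ← Matrix.mulVec_mulVec, Matrix.dotProduct_mulVec, hx]

lemma hQR (hA : A.PosDef) : mpow A (1/2) * mpow A (-(1/2)) = 1 := by
  rw [mpow_add hA]
  norm_num
  exact mpow_zero hA.1

lemma hRQ (hA : A.PosDef) : mpow A (-(1/2)) * mpow A (1/2) = 1 := by
  rw [mpow_add hA]
  norm_num
  exact mpow_zero hA.1

lemma hRR (hA : A.PosDef) : mpow A (-(1/2)) * mpow A (-(1/2)) = A⁻¹ := by
  rw [mpow_add hA, inv_eq_mpow hA]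
  norm_num

lemma hM_posDef (hA : A.PosDef) (hB : B.PosDef) :
    (mpow A (-(1/2)) * B * mpow A (-(1/2))).PosDef := by
  have hR := mpow_posDef hA (-(1/2))
  have h := posDef_conj (B := mpow A (-(1/2))) hB ((Matrix.isUnit_iff_isUnit_det _).mpr
    hR.det_pos.ne'.isUnit)
  rwa [hR.1.eq] at h

lemma geo_inv (hA : A.PosDef) (hB : B.PosDef) {t : ℝ} :
    (geo A B t)⁻¹ = mpow A (-(1/2)) *
      mpow (mpow A (-(1/2)) * B * mpow A (-(1/2))) (-t) * mpow A (-(1/2)) := by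
  have hM := hM_posDef hA hB
  apply Matrix.inv_eq_right_inv
  unfold geo
  set M := mpow A (-(1/2)) * B * mpow A (-(1/2)) with hMdef
  calc mpow A (1/2) * mpow M t * mpow A (1/2) *
        (mpow A (-(1/2)) * mpow M (-t) * mpow A (-(1/2)))
      = mpow A (1/2) * (mpow M t * ((mpow A (1/2) * mpow A (-(1/2))) * mpow M (-t))) *
          mpow A (-(1/2)) := by simp only [Matrix.mul_assoc]
    _ = mpow A (1/2) * (mpow M t * mpow M (-t)) * mpow A (-(1/2)) := by
        rw [hQR hA, one_mul]
    _ = 1 := by rw [mpow_mul_neg hM, mul_one, hQR hA]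

lemma S2_eq (hA : A.PosDef) :
    mpow A (1/2) * (mpow A (-(1/2)) * B * mpow A (-(1/2))) * mpow A (1/2) = B := by
  simp only [Matrix.mul_assoc]
  rw [← Matrix.mul_assoc (mpow A (1/2)) (mpow A (-(1/2))), hQR hA, one_mul,
    hRQ hA, mul_one]

lemma S2_inv (hA : A.PosDef) (hB : B.PosDef) : B⁻¹ = mpow A (-(1/2)) *
    mpow (mpow A (-(1/2)) * B * mpow A (-(1/2))) (-1) * mpow A (-(1/2)) := by
  have hM := hM_posDef hA hB
  apply Matrix.inv_eq_right_inv
  set M := mpow A (-(1/2)) * B * mpow A (-(1/2)) with hMdef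
  have hMM : M * mpow M (-1) = 1 := by
    nth_rewrite 1 [← mpow_one hM.1]
    exact mpow_mul_neg hM 1
  have key : mpow A (1/2) * M * mpow A (1/2) *
      (mpow A (-(1/2)) * mpow M (-1) * mpow A (-(1/2))) = 1 := by
    calc mpow A (1/2) * M * mpow A (1/2) *
          (mpow A (-(1/2)) * mpow M (-1) * mpow A (-(1/2)))
        = mpow A (1/2) * (M * ((mpow A (1/2) * mpow A (-(1/2))) * mpow M (-1))) *
            mpow A (-(1/2)) := by simp only [Matrix.mul_assoc]
      _ = mpow A (1/2) * (M * mpow M (-1)) * mpow A (-(1/2)) := by rw [hQR hA, one_mul]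
      _ = 1 := by rw [hMM, mul_one, hQR hA]
  have h3 := congrArg
    (· * (mpow A (-(1/2)) * mpow M (-1) * mpow A (-(1/2)))) (S2_eq (B := B) hA)
  exact h3.symm.trans key


lemma hQQ (hA : A.PosDef) : mpow A (1/2) * mpow A (1/2) = A := by
  rw [mpow_add hA]
  norm_num
  exact mpow_one hA.1

lemma key_det (hA : A.PosDef) (hB : B.PosDef) (t : ℝ) :
    Real.log (geo A B t).det = (1 - t) * Real.log A.det + t * Real.log B.det := by
  have hM := hM_posDef hA hB
  set M := mpow A (-(1/2)) * B * mpow A (-(1/2)) with hMdef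
  have hdetgeo : (geo A B t).det = A.det * (mpow M t).det := by
    unfold geo
    rw [Matrix.det_mul, Matrix.det_mul]
    have h : (mpow A (1/2)).det * (mpow A (1/2)).det = A.det := by
      rw [← Matrix.det_mul, hQQ hA]
    calc (mpow A (1/2)).det * (mpow M t).det * (mpow A (1/2)).det
        = (mpow A (1/2)).det * (mpow A (1/2)).det * (mpow M t).det := by ring
      _ = A.det * (mpow M t).det := by rw [h]
  have hdetM : M.det = B.det * (A.det)⁻¹ := by
    rw [hMdef, Matrix.det_mul, Matrix.det_mul]
    have h : (mpow A (-(1/2))).det * (mpow A (-(1/2))).det = (A.det)⁻¹ := by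
      rw [← Matrix.det_mul, hRR hA, Matrix.det_nonsing_inv, Ring.inverse_eq_inv']
    calc (mpow A (-(1/2))).det * B.det * (mpow A (-(1/2))).det
        = (mpow A (-(1/2))).det * (mpow A (-(1/2))).det * B.det := by ring
      _ = (A.det)⁻¹ * B.det := by rw [h]
      _ = B.det * (A.det)⁻¹ := by ring
  rw [hdetgeo, Real.log_mul hA.det_pos.ne' (mpow_posDef hM t).det_pos.ne',
    log_det_mpow hM, hdetM, Real.log_mul hB.det_pos.ne' (inv_ne_zero hA.det_pos.ne'),
    Real.log_inv]
  ring

lemma key_log (hA : A.PosDef) (hB : B.PosDef) {t : ℝ} (ht : t ∈ Set.Ioo (0:ℝ) 1)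
    {x : Fin p → ℝ} (hx : x ≠ 0) :
    Real.log (x ⬝ᵥ (geo A B t)⁻¹ *ᵥ x) ≤
      (1 - t) * Real.log (x ⬝ᵥ A⁻¹ *ᵥ x) + t * Real.log (x ⬝ᵥ B⁻¹ *ᵥ x) := by
  have hM := hM_posDef hA hB
  set M := mpow A (-(1/2)) * B * mpow A (-(1/2)) with hMdef
  have hRpd := mpow_posDef hA (-(1/2))
  set w := mpow A (-(1/2)) *ᵥ x with hw
  -- quadratic form identities
  have e0 : x ⬝ᵥ A⁻¹ *ᵥ x = w ⬝ᵥ (mpow M 0) *ᵥ w := by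
    rw [mpow_zero hM.1, ← hRR hA,
      show mpow A (-(1/2)) * mpow A (-(1/2)) =
        mpow A (-(1/2)) * 1 * mpow A (-(1/2)) by rw [mul_one],
      quad_conj hRpd.1]
  have eT : x ⬝ᵥ (geo A B t)⁻¹ *ᵥ x = w ⬝ᵥ (mpow M (-t)) *ᵥ w := by
    rw [geo_inv hA hB, quad_conj hRpd.1]
  have e1 : x ⬝ᵥ B⁻¹ *ᵥ x = w ⬝ᵥ (mpow M (-1)) *ᵥ w := by
    rw [S2_inv hA hB, quad_conj hRpd.1]
  -- eigen-expansion
  set c : Fin p → ℝ := fun i =>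
    ((star (hM.1.eigenvectorUnitary : Matrix (Fin p) (Fin p) ℝ) *ᵥ w) i) ^ 2 with hc
  set lam : Fin p → ℝ := fun i => (hM.1.eigenvalues i)⁻¹ with hlam
  have hcnn : ∀ i, 0 ≤ c i := fun i => sq_nonneg _
  have hlpos : ∀ i, 0 < lam i := fun i => inv_pos.mpr (hM.eigenvalues_pos i)
  have hq : ∀ s : ℝ, w ⬝ᵥ (mpow M s) *ᵥ w = ∑ i, c i * hM.1.eigenvalues i ^ s :=
    fun s => quadform_mpow hM s w
  have hqT : w ⬝ᵥ (mpow M (-t)) *ᵥ w = ∑ i, c i * lam i ^ t := by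
    rw [hq]
    refine Finset.sum_congr rfl fun i _ => ?_
    rw [hlam, Real.inv_rpow (hM.eigenvalues_pos i).le, ← Real.rpow_neg
      (hM.eigenvalues_pos i).le]
  have hq0 : w ⬝ᵥ (mpow M 0) *ᵥ w = ∑ i, c i := by
    rw [hq]
    exact Finset.sum_congr rfl fun i _ => by rw [Real.rpow_zero, mul_one]
  have hq1 : w ⬝ᵥ (mpow M (-1)) *ᵥ w = ∑ i, c i * lam i := by
    rw [hq]
    exact Finset.sum_congr rfl fun i _ => by simp [Real.rpow_neg_one, hlam]
  -- positivity of endpoints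
  have hS0 : 0 < ∑ i, c i := by
    rw [← hq0, ← e0]
    simpa using hA.inv.dotProduct_mulVec_pos hx
  have hS1 : 0 < ∑ i, c i * lam i := by
    rw [← hq1, ← e1]
    simpa using hB.inv.dotProduct_mulVec_pos hx
  rw [eT, hqT, e0, hq0, e1, hq1]
  exact log_hoelder c lam hcnn hlpos ht hS0 hS1

end key

theorem tyler_cost_convex_and_L0_geodesically_convex {p n : ℕ} (hp : 1 ≤ p)
    (z : Fin n → Fin p → ℝ) (hz : ∀ i, z i ≠ 0) :
    ConvexOn ℝ Set.univ (fun x : ℝ => x / (2 * p)) ∧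
    (∀ (S1 S2 : Matrix (Fin p) (Fin p) ℝ), S1.PosDef → S2.PosDef →
      ∀ t ∈ Set.Ioo (0:ℝ) 1,
        ((1 / (2 * p : ℝ)) * ∑ i, Real.log (z i ⬝ᵥ (geo S1 S2 t)⁻¹ *ᵥ z i)
            + (n / 2 : ℝ) * Real.log (geo S1 S2 t).det) ≤
          (1 - t) * ((1 / (2 * p : ℝ)) * ∑ i, Real.log (z i ⬝ᵥ S1⁻¹ *ᵥ z i)
              + (n / 2 : ℝ) * Real.log S1.det)
            + t * ((1 / (2 * p : ℝ)) * ∑ i, Real.log (z i ⬝ᵥ S2⁻¹ *ᵥ z i)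
              + (n / 2 : ℝ) * Real.log S2.det)) := by
  constructor
  · refine ⟨convex_univ, fun x _ y _ a b ha hb hab => ?_⟩
    simp only [smul_eq_mul]
    exact le_of_eq (by ring)
  · intro S1 S2 h1 h2 t ht
    have hdet := key_det h1 h2 t
    have hsum : ∑ i, Real.log (z i ⬝ᵥ (geo S1 S2 t)⁻¹ *ᵥ z i) ≤
        (1 - t) * ∑ i, Real.log (z i ⬝ᵥ S1⁻¹ *ᵥ z i)
          + t * ∑ i, Real.log (z i ⬝ᵥ S2⁻¹ *ᵥ z i) := by
      calc ∑ i, Real.log (z i ⬝ᵥ (geo S1 S2 t)⁻¹ *ᵥ z i)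
          ≤ ∑ i, ((1 - t) * Real.log (z i ⬝ᵥ S1⁻¹ *ᵥ z i)
              + t * Real.log (z i ⬝ᵥ S2⁻¹ *ᵥ z i)) :=
            Finset.sum_le_sum fun i _ => key_log h1 h2 ht (hz i)
        _ = _ := by rw [Finset.sum_add_distrib, ← Finset.mul_sum, ← Finset.mul_sum]
    have hc : (0:ℝ) ≤ 1 / (2 * p) := by positivity
    have h3 := mul_le_mul_of_nonneg_left hsum hc
    rw [hdet]
    ring_nf
    ring_nf at h3
    linarith
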